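/- arXiv:2104.09118 — 2 statements merged into one kernel-verified Lean document; each statement's English description precedes it below -/
import Mathlib

section
/- For real α with 1/2 < α < 3/2, there exist constants c_1, c_2 > 0 such that for all even L ≥ 4, ∑_{x=1}^{L/2} (∑_{y=1}^{L/2} 1/(x+y)^{2α})^{1/2} ≥ c_1 L^{3/2−α} − c_2. -/
theorem stmt_7 (α : ℝ) (hα1 : 1/2 < α) (hα2 : α < 3/2) :
    ∃ c₁ c₂ : ℝ, 0 < c₁ ∧ 0 < c₂ ∧
      ∀ L : ℕ, 4 ≤ L → Even L →
        c₁ * (L : ℝ) ^ (3/2 - α) - c₂ ≤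
          ∑ x ∈ Finset.Icc 1 (L/2),
            (∑ y ∈ Finset.Icc 1 (L/2), 1 / ((x : ℝ) + y) ^ (2*α)) ^ ((1:ℝ)/2) := by
  refine ⟨(2:ℝ) ^ (-(3/2) : ℝ), 1, Real.rpow_pos_of_pos two_pos _, one_pos, ?_⟩
  intro L hL hEven
  set n := L / 2 with hn
  have h2 : (n : ℝ) * 2 = (L : ℝ) := by
    exact_mod_cast Nat.div_mul_cancel hEven.two_dvd
  have hn2 : 2 ≤ n := by omega
  have hnpos : (0:ℝ) < (n:ℝ) := by
    have : (0:ℕ) < n := by omega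
    exact_mod_cast this
  have hLpos : (0:ℝ) < (L:ℝ) := by
    have : (0:ℕ) < L := by omega
    exact_mod_cast this
  have key : ∀ x ∈ Finset.Icc 1 n,
      (n : ℝ) ^ ((1:ℝ)/2) * (L:ℝ) ^ (-α) ≤
        (∑ y ∈ Finset.Icc 1 n, 1 / ((x : ℝ) + y) ^ (2*α)) ^ ((1:ℝ)/2) := by
    intro x hx
    obtain ⟨hx1, hxn⟩ := Finset.mem_Icc.mp hx
    have inner : (n : ℝ) * (1 / (L:ℝ) ^ (2*α)) ≤
        ∑ y ∈ Finset.Icc 1 n, 1 / ((x : ℝ) + y) ^ (2*α) := by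
      have hterm : ∀ y ∈ Finset.Icc 1 n,
          (1 / (L:ℝ) ^ (2*α)) ≤ 1 / ((x : ℝ) + y) ^ (2*α) := by
        intro y hy
        obtain ⟨hy1, hyn⟩ := Finset.mem_Icc.mp hy
        have hx1' : (1:ℝ) ≤ (x:ℝ) := by exact_mod_cast hx1
        have hy1' : (1:ℝ) ≤ (y:ℝ) := by exact_mod_cast hy1
        have hxy : (0:ℝ) < (x:ℝ) + y := by linarith
        have hle : (x:ℝ) + y ≤ (L:ℝ) := by
          have : x + y ≤ L := by omega
          exact_mod_cast this
        have hpow : ((x:ℝ) + y) ^ (2*α) ≤ (L:ℝ) ^ (2*α) :=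
          Real.rpow_le_rpow hxy.le hle (by linarith)
        exact one_div_le_one_div_of_le (Real.rpow_pos_of_pos hxy _) hpow
      calc (n:ℝ) * (1 / (L:ℝ) ^ (2*α))
          = ∑ _y ∈ Finset.Icc 1 n, 1 / (L:ℝ) ^ (2*α) := by
            rw [Finset.sum_const, Nat.card_Icc]
            simp [nsmul_eq_mul]
        _ ≤ _ := Finset.sum_le_sum hterm
    have h1 : (n : ℝ) ^ ((1:ℝ)/2) * (L:ℝ) ^ (-α)
        = ((n:ℝ) * (1 / (L:ℝ) ^ (2*α))) ^ ((1:ℝ)/2) := by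
      rw [one_div ((L:ℝ) ^ (2*α)), ← Real.rpow_neg hLpos.le,
        Real.mul_rpow hnpos.le (Real.rpow_nonneg hLpos.le _),
        ← Real.rpow_mul hLpos.le]
      congr 1
      ring
    rw [h1]
    exact Real.rpow_le_rpow (by positivity) inner (by norm_num)
  have total : (n:ℝ) * ((n : ℝ) ^ ((1:ℝ)/2) * (L:ℝ) ^ (-α)) ≤
      ∑ x ∈ Finset.Icc 1 n,
        (∑ y ∈ Finset.Icc 1 n, 1 / ((x : ℝ) + y) ^ (2*α)) ^ ((1:ℝ)/2) := by
    calc (n:ℝ) * ((n : ℝ) ^ ((1:ℝ)/2) * (L:ℝ) ^ (-α))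
        = ∑ _x ∈ Finset.Icc 1 n, (n : ℝ) ^ ((1:ℝ)/2) * (L:ℝ) ^ (-α) := by
          rw [Finset.sum_const, Nat.card_Icc]
          simp [nsmul_eq_mul]
      _ ≤ _ := Finset.sum_le_sum key
  have heq : (n:ℝ) * ((n : ℝ) ^ ((1:ℝ)/2) * (L:ℝ) ^ (-α))
      = (2:ℝ) ^ (-(3/2) : ℝ) * (L : ℝ) ^ (3/2 - α) := by
    have hnL : (n:ℝ) = (L:ℝ) / 2 := by linarith
    have e1 : (n:ℝ) * (n : ℝ) ^ ((1:ℝ)/2) = (n:ℝ) ^ ((3:ℝ)/2) := by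
      have h := Real.rpow_add hnpos 1 (1/2)
      rw [Real.rpow_one] at h
      rw [← h]
      norm_num
    calc (n:ℝ) * ((n : ℝ) ^ ((1:ℝ)/2) * (L:ℝ) ^ (-α))
        = ((n:ℝ) * (n : ℝ) ^ ((1:ℝ)/2)) * (L:ℝ) ^ (-α) := by ring
      _ = (n:ℝ) ^ ((3:ℝ)/2) * (L:ℝ) ^ (-α) := by rw [e1]
      _ = ((L:ℝ)/2) ^ ((3:ℝ)/2) * (L:ℝ) ^ (-α) := by rw [hnL]
      _ = (L:ℝ) ^ ((3:ℝ)/2) / (2:ℝ) ^ ((3:ℝ)/2) * (L:ℝ) ^ (-α) := by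
          rw [Real.div_rpow hLpos.le (by norm_num)]
      _ = (2:ℝ) ^ (-(3/2) : ℝ) * ((L:ℝ) ^ ((3:ℝ)/2) * (L:ℝ) ^ (-α)) := by
          rw [Real.rpow_neg (by norm_num : (0:ℝ) ≤ 2)]
          ring
      _ = (2:ℝ) ^ (-(3/2) : ℝ) * (L : ℝ) ^ (3/2 - α) := by
          rw [← Real.rpow_add hLpos]
          ring_nf
  rw [← heq]
  linarith
end

section
/- For the one-dimensional long-range hopping model with single-particle Hamiltonian matrix h_{jk} = −1/|j−k|^α (for j ≠ k, distances taken on a ring of L sites with |j−k| ≤ L/2), and the boundary coupling matrix restricted to pairs crossing the cut between sites {1,…,L/2} and {L/2+1,…,L}: if α > 3/2, then the operator norm of the boundary coupling matrix (as a quadratic-form fermionic operator H_{AB}) is bounded above uniformly in L. -/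
open Real Finset

/-- Bernoulli-type: for `u ≥ 1`, `h > 0`: `h*(1 - 1/u) ≤ u^h - 1`. -/
lemma bern {u h : ℝ} (hu : 1 ≤ u) (hh : 0 < h) : h * (1 - 1/u) ≤ u ^ h - 1 := by
  have hu0 : 0 < u := lt_of_lt_of_le one_pos hu
  rcases le_or_gt 1 h with h1 | h1
  · have hs : (-1:ℝ) ≤ u - 1 := by linarith
    have hb := one_add_mul_self_le_rpow_one_add hs h1
    have h2 : 1 - 1/u ≤ u - 1 := by
      have e : u - 1 - (1 - 1/u) = (u-1)^2/u := by field_simp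
      have : (0:ℝ) ≤ (u-1)^2/u := by positivity
      linarith
    have h3 : h * (1 - 1/u) ≤ h * (u - 1) := mul_le_mul_of_nonneg_left h2 hh.le
    calc h * (1 - 1/u) ≤ h * (u-1) := h3
      _ ≤ (1 + (u-1)) ^ h - 1 := by linarith
      _ = u ^ h - 1 := by ring_nf
  · -- 0 < h < 1 case
    set v := 1/u with hv
    have hv0 : 0 < v := by positivity
    have hv1 : v ≤ 1 := by rw [hv, div_le_one hu0]; exact hu
    have hs : (-1:ℝ) ≤ v - 1 := by linarith
    have hb : (1 + (v-1)) ^ h ≤ 1 + h * (v - 1) :=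
      rpow_one_add_le_one_add_mul_self hs hh.le h1.le
    have hb' : v ^ h ≤ 1 + h * (v - 1) := by
      have e : 1 + (v - 1) = v := by ring
      rwa [e] at hb
    have hden : 0 < 1 + h * (v - 1) := by nlinarith
    have hvh : 0 < v ^ h := rpow_pos_of_pos hv0 h
    have huv : u ^ h = (v ^ h)⁻¹ := by
      rw [hv, one_div, Real.inv_rpow hu0.le, inv_inv]
    have h4 : (1 + h * (v-1))⁻¹ ≤ (v ^ h)⁻¹ := inv_anti₀ hvh hb'
    have key : (1 + h*(1-v)) * (1 + h*(v-1)) ≤ 1 := by nlinarith [sq_nonneg (h*(1-v))]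
    have h5 : 1 + h * (1 - v) ≤ (1 + h * (v-1))⁻¹ := by
      rw [inv_eq_one_div, le_div_iff₀ hden]; linarith
    calc h * (1 - 1/u) = h * (1 - v) := by rw [hv]
      _ ≤ (1 + h*(v-1))⁻¹ - 1 := by linarith
      _ ≤ (v ^ h)⁻¹ - 1 := by linarith
      _ = u ^ h - 1 := by rw [huv]

/-- Step: for `s > 1` and `d ≥ 1`, `(s-1) * (d+1)^(-s) ≤ d^(1-s) - (d+1)^(1-s)`. -/
lemma step_ineq {s : ℝ} (hs : 1 < s) {d : ℕ} (hd : 1 ≤ d) :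
    (s - 1) * ((d:ℝ) + 1) ^ (-s) ≤ (d:ℝ) ^ (1-s) - ((d:ℝ)+1) ^ (1-s) := by
  set x := (d:ℝ) with hxdef
  have hx : (1:ℝ) ≤ x := by rw [hxdef]; exact_mod_cast hd
  have hx0 : 0 < x := lt_of_lt_of_le one_pos hx
  set y := x + 1 with hy
  have hy0 : 0 < y := by positivity
  set t := s - 1 with ht
  have ht0 : 0 < t := by linarith
  have hu : 1 ≤ y / x := by rw [le_div_iff₀ hx0]; linarith
  have hb := bern hu ht0
  -- (y/x)^t = y^t / x^t;  1/(y/x) = x/y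
  have e1 : (y/x) ^ t = y ^ t / x ^ t := Real.div_rpow hy0.le hx0.le t
  have e2 : 1/(y/x) = x/y := by rw [one_div_div]
  rw [e1, e2] at hb
  -- multiply both sides by y^(-t) > 0
  have hyt : 0 < y ^ (-t) := rpow_pos_of_pos hy0 _
  have hb2 : t * (1 - x/y) * y ^ (-t) ≤ (y^t/x^t - 1) * y ^ (-t) :=
    mul_le_mul_of_nonneg_right hb hyt.le
  have eyx : y ^ t * y ^ (-t) = 1 := by
    rw [← Real.rpow_add hy0]; simp
  have lhs_eq : t * (1 - x/y) * y ^ (-t) = t * y ^ (-s) := by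
    have h1xy : 1 - x/y = 1/y := by field_simp; rw [hy]; ring
    rw [h1xy]
    have : 1/y * y ^ (-t) = y ^ (-s) := by
      rw [one_div, ← Real.rpow_neg_one y, ← Real.rpow_add hy0]
      congr 1; linarith
    rw [mul_assoc, this]
  have rhs_eq : (y^t/x^t - 1) * y ^ (-t) = x ^ (1-s) - y ^ (1-s) := by
    have ex : x ^ (1-s) = (x^t)⁻¹ := by
      rw [← Real.rpow_neg hx0.le]; congr 1; linarith
    have ey : y ^ (1-s) = y ^ (-t) := by congr 1; linarith
    rw [sub_mul, one_mul, div_mul_eq_mul_div, eyx, ex, ey, one_div]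
  rw [lhs_eq, rhs_eq] at hb2
  convert hb2 using 2 <;> rw [ht]

/-- Telescoping tail: for `s > 1`, `1 ≤ m ≤ N`:
`∑_{d=m+1}^{N} d^(-s) ≤ (m^(1-s) - N^(1-s))/(s-1)`. -/
lemma tail_aux {s : ℝ} (hs : 1 < s) {m : ℕ} (hm : 1 ≤ m) :
    ∀ N, m ≤ N → ∑ d ∈ Finset.Icc (m+1) N, ((d:ℝ)) ^ (-s)
      ≤ ((m:ℝ) ^ (1-s) - (N:ℝ) ^ (1-s)) / (s-1) := by
  intro N hN
  induction N, hN using Nat.le_induction with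
  | base => simp
  | succ N hN ih =>
    rw [Finset.sum_Icc_succ_top (by omega : m+1 ≤ N+1)]
    have hstep := step_ineq hs (le_trans hm hN)
    have hs1 : (0:ℝ) < s - 1 := by linarith
    have h1 : ((N:ℝ)+1) ^ (-s) ≤ ((N:ℝ)^(1-s) - ((N:ℝ)+1)^(1-s)) / (s-1) := by
      rw [le_div_iff₀ hs1, mul_comm]; exact hstep
    have hcast : ((N+1 : ℕ):ℝ) = (N:ℝ)+1 := by push_cast; ring
    rw [hcast]
    calc (∑ d ∈ Finset.Icc (m+1) N, ((d:ℝ)) ^ (-s)) + ((N:ℝ)+1) ^ (-s)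
        ≤ ((m:ℝ)^(1-s) - (N:ℝ)^(1-s))/(s-1) + ((N:ℝ)^(1-s) - ((N:ℝ)+1)^(1-s))/(s-1) := by
          exact add_le_add ih h1
      _ = ((m:ℝ)^(1-s) - ((N:ℝ)+1)^(1-s))/(s-1) := by ring

/-- Tail bound: for `s > 1`, `1 ≤ m`: `∑_{d=m}^{N} d^(-s) ≤ (1 + 1/(s-1)) * m^(1-s)`. -/
lemma tail_bound {s : ℝ} (hs : 1 < s) {m : ℕ} (hm : 1 ≤ m) (N : ℕ) :
    ∑ d ∈ Finset.Icc m N, ((d:ℝ)) ^ (-s) ≤ (1 + 1/(s-1)) * (m:ℝ) ^ (1-s) := by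
  have hs1 : (0:ℝ) < s - 1 := by linarith
  have hm0 : (0:ℝ) < (m:ℝ) := by exact_mod_cast hm
  have hm1 : (1:ℝ) ≤ (m:ℝ) := by exact_mod_cast hm
  have hmpow : (0:ℝ) < (m:ℝ) ^ (1-s) := Real.rpow_pos_of_pos hm0 _
  rcases lt_or_ge N m with h | h
  · have : Finset.Icc m N = ∅ := by rw [Finset.Icc_eq_empty]; omega
    rw [this, Finset.sum_empty]
    positivity
  · have hsplit : Finset.Icc m N = insert m (Finset.Icc (m+1) N) := by
      ext d; simp only [Finset.mem_Icc, Finset.mem_insert]; omega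
    have hnotmem : m ∉ Finset.Icc (m+1) N := by simp
    rw [hsplit, Finset.sum_insert hnotmem]
    have h1 : ((m:ℝ)) ^ (-s) ≤ (m:ℝ) ^ (1-s) :=
      Real.rpow_le_rpow_of_exponent_le hm1 (by linarith)
    have h2 := tail_aux hs hm N h
    have hNpow : (0:ℝ) ≤ (N:ℝ) ^ (1-s) := (Real.rpow_pos_of_pos (by exact_mod_cast le_trans hm h : (0:ℝ) < (N:ℝ)) _).le
    have h3 : ((m:ℝ)^(1-s) - (N:ℝ)^(1-s))/(s-1) ≤ (m:ℝ)^(1-s)/(s-1) := by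
      apply div_le_div_of_nonneg_right ?_ hs1.le
      linarith
    calc ((m:ℝ)) ^ (-s) + ∑ d ∈ Finset.Icc (m+1) N, ((d:ℝ)) ^ (-s)
        ≤ (m:ℝ)^(1-s) + (m:ℝ)^(1-s)/(s-1) := by
          apply add_le_add h1 (le_trans h2 h3)
      _ = (1 + 1/(s-1)) * (m:ℝ)^(1-s) := by ring


open ContinuousLinearMap

/-- Chord (ring) distance between sites `j` and `k` on a ring of `L` sites. -/
def ringDist (L j k : ℕ) : ℕ := min ((j : ℤ) - (k : ℤ)).natAbs (L - ((j : ℤ) - (k : ℤ)).natAbs)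

set_option synthInstance.maxHeartbeats 1000000
set_option maxHeartbeats 1600000

variable {H : Type*} [NormedAddCommGroup H] [InnerProductSpace ℂ H] [CompleteSpace H]

/-- `‖T‖² ≤ ‖T†T + S†S‖`. -/
lemma opnorm_sq_le (T S : H →L[ℂ] H) :
    ‖T‖^2 ≤ ‖adjoint T * T + adjoint S * S‖ := by
  set M := ‖adjoint T * T + adjoint S * S‖ with hMdef
  have hM : 0 ≤ M := norm_nonneg _
  have key : ∀ x : H, ‖T x‖^2 ≤ M * ‖x‖^2 := by
    intro x
    have e1 : (inner ℂ ((adjoint T * T + adjoint S * S) x) x : ℂ)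
        = ((‖T x‖^2 + ‖S x‖^2 : ℝ) : ℂ) := by
      rw [ContinuousLinearMap.add_apply, inner_add_left,
        ContinuousLinearMap.mul_apply, ContinuousLinearMap.mul_apply,
        adjoint_inner_left, adjoint_inner_left,
        inner_self_eq_norm_sq_to_K, inner_self_eq_norm_sq_to_K]
      push_cast
      ring_nf
      norm_cast
    have e2 : ‖T x‖^2 + ‖S x‖^2
        ≤ ‖(adjoint T * T + adjoint S * S) x‖ * ‖x‖ := by
      have h3 := norm_inner_le_norm (𝕜 := ℂ) ((adjoint T * T + adjoint S * S) x) x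
      rw [e1] at h3
      have h4 : ‖((‖T x‖^2 + ‖S x‖^2 : ℝ) : ℂ)‖ = ‖T x‖^2 + ‖S x‖^2 := by
        rw [Complex.norm_real, Real.norm_eq_abs, abs_of_nonneg (by positivity)]
      rwa [h4] at h3
    have e3 : ‖(adjoint T * T + adjoint S * S) x‖ * ‖x‖ ≤ M * ‖x‖^2 := by
      have h5 := (adjoint T * T + adjoint S * S).le_opNorm x
      have hx : 0 ≤ ‖x‖ := norm_nonneg x
      calc ‖(adjoint T * T + adjoint S * S) x‖ * ‖x‖ ≤ (M * ‖x‖) * ‖x‖ :=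
            mul_le_mul_of_nonneg_right h5 hx
        _ = M * ‖x‖^2 := by ring
    nlinarith [sq_nonneg (‖S x‖)]
  have hTle : ‖T‖ ≤ Real.sqrt M := by
    apply ContinuousLinearMap.opNorm_le_bound _ (Real.sqrt_nonneg M)
    intro x
    have h6 : ‖T x‖ ≤ Real.sqrt (M * ‖x‖^2) := by
      rw [show ‖T x‖ = Real.sqrt (‖T x‖^2) from (Real.sqrt_sq (norm_nonneg _)).symm]
      exact Real.sqrt_le_sqrt (key x)
    rwa [Real.sqrt_mul hM, Real.sqrt_sq (norm_nonneg x)] at h6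
  calc ‖T‖^2 ≤ (Real.sqrt M)^2 := pow_le_pow_left₀ (norm_nonneg T) hTle 2
    _ = M := Real.sq_sqrt hM

/-- Adjoint of a real linear combination. -/
lemma adjoint_comb {L : ℕ} (c : Fin L → H →L[ℂ] H) (β : Fin L → ℝ) :
    adjoint (∑ k, β k • c k) = ∑ k, β k • adjoint (c k) := by
  rw [map_sum]
  refine Finset.sum_congr rfl fun k _ => ?_
  have h : (β k : ℝ) • c k = ((β k : ℂ)) • c k := by
    rw [← Complex.coe_algebraMap, algebraMap_smul]
  rw [h, LinearIsometryEquiv.map_smulₛₗ]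
  simp [← Complex.coe_algebraMap, algebraMap_smul]

/-- norm of adjoint -/
lemma norm_adjoint' (X : H →L[ℂ] H) : ‖adjoint X‖ = ‖X‖ :=
  LinearIsometryEquiv.norm_map adjoint X

/-- Each annihilation operator is a contraction. -/
lemma fermion_norm_le_one {L : ℕ} (c : Fin L → H →L[ℂ] H)
    (hc1 : ∀ i j : Fin L, c i * adjoint (c j) + adjoint (c j) * c i
      = if i = j then (1 : H →L[ℂ] H) else 0)
    (i : Fin L) : ‖c i‖ ≤ 1 := by
  have h := opnorm_sq_le (c i) (adjoint (c i))
  rw [adjoint_adjoint] at h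
  have he : adjoint (c i) * c i + c i * adjoint (c i) = 1 := by
    rw [add_comm]
    have := hc1 i i
    simpa using this
  rw [he] at h
  have h1 : ‖(1 : H →L[ℂ] H)‖ ≤ 1 := by
    rw [ContinuousLinearMap.one_def]; exact ContinuousLinearMap.norm_id_le
  nlinarith [norm_nonneg (c i)]

/-- Norm bound for a real linear combination of fermionic annihilation operators. -/
lemma fermion_comb_norm_sq {L : ℕ} (c : Fin L → H →L[ℂ] H)
    (hc1 : ∀ i j : Fin L, c i * adjoint (c j) + adjoint (c j) * c i
      = if i = j then (1 : H →L[ℂ] H) else 0)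
    (β : Fin L → ℝ) :
    ‖∑ k, β k • c k‖^2 ≤ ∑ k, (β k)^2 := by
  set b := ∑ k, β k • c k with hbdef
  have hadj : adjoint b = ∑ k, β k • adjoint (c k) := by
    rw [hbdef]; exact adjoint_comb c β
  have expand : ∀ (f g : Fin L → H →L[ℂ] H),
      (∑ k, β k • f k) * (∑ k', β k' • g k')
        = ∑ k, ∑ k', (β k * β k') • (f k * g k') := by
    intro f g
    rw [Finset.sum_mul]
    refine Finset.sum_congr rfl fun k _ => ?_
    rw [Finset.mul_sum]
    refine Finset.sum_congr rfl fun k' _ => ?_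
    rw [smul_mul_smul_comm]
  have hN : adjoint b * b + b * adjoint b = (∑ k, (β k)^2) • (1 : H →L[ℂ] H) := by
    rw [hadj, hbdef, expand, expand]
    rw [Finset.sum_comm (f := fun k k' => (β k * β k') • (c k * adjoint (c k')))]
    rw [← Finset.sum_add_distrib]
    calc ∑ k, ((∑ k', (β k * β k') • (adjoint (c k) * c k'))
            + ∑ k', (β k' * β k) • (c k' * adjoint (c k)))
        = ∑ k, (β k)^2 • (1 : H →L[ℂ] H) := by
          refine Finset.sum_congr rfl fun k _ => ?_
          rw [← Finset.sum_add_distrib]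
          calc ∑ k', ((β k * β k') • (adjoint (c k) * c k')
                  + (β k' * β k) • (c k' * adjoint (c k)))
              = ∑ k', (β k * β k') • (if k' = k then (1:H →L[ℂ] H) else 0) := by
                refine Finset.sum_congr rfl fun k' _ => ?_
                rw [mul_comm (β k') (β k), ← smul_add, ← hc1 k' k]
                rw [add_comm]
            _ = (β k)^2 • (1 : H →L[ℂ] H) := by
                simp only [smul_ite, smul_zero, Finset.sum_ite_eq', Finset.mem_univ,
                  if_true]
                rw [sq]
      _ = (∑ k, (β k)^2) • (1 : H →L[ℂ] H) := (Finset.sum_smul).symm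
  have h1 := opnorm_sq_le b (adjoint b)
  rw [adjoint_adjoint, hN] at h1
  refine le_trans h1 ?_
  have hnn : 0 ≤ ∑ k, (β k)^2 := Finset.sum_nonneg fun k _ => sq_nonneg _
  rw [norm_smul, Real.norm_eq_abs, abs_of_nonneg hnn]
  calc (∑ k, (β k)^2) * ‖(1 : H →L[ℂ] H)‖ ≤ (∑ k, (β k)^2) * 1 := by
        apply mul_le_mul_of_nonneg_left _ hnn
        rw [ContinuousLinearMap.one_def]
        exact ContinuousLinearMap.norm_id_le
    _ = ∑ k, (β k)^2 := mul_one _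

section Main

set_option maxHeartbeats 2000000 in
theorem stmt_18 (α : ℝ) (hα : 3/2 < α) :
    ∃ C : ℝ, ∀ (L : ℕ), Even L → 4 ≤ L →
      ∀ (H : Type) (_ : NormedAddCommGroup H) (_ : InnerProductSpace ℂ H)
        (_ : CompleteSpace H) (c : Fin L → H →L[ℂ] H),
        (∀ i j : Fin L, c i * adjoint (c j) + adjoint (c j) * c i
          = if i = j then (1 : H →L[ℂ] H) else 0) →
        (∀ i j : Fin L, c i * c j + c j * c i = 0) →
        ‖∑ j : Fin L, ∑ k : Fin L,
            if (j : ℕ) < L/2 ∧ L/2 ≤ (k : ℕ) then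
              (-(1 : ℝ) / ((ringDist L j k : ℕ) : ℝ) ^ α) •
                (adjoint (c j) * c k + adjoint (c k) * c j)
            else 0‖ ≤ C := by
  have hs2 : (1:ℝ) < 2*α := by linarith
  have hs1 : (1:ℝ) < α - 1/2 := by linarith
  set C₂ : ℝ := 1 + 1/(2*α - 1) with hC₂
  set C₁ : ℝ := 1 + 1/(α - 1/2 - 1) with hC₁
  have h2α1 : (0:ℝ) < 2*α - 1 := by linarith
  have hα32 : (0:ℝ) < α - 1/2 - 1 := by linarith
  have hC₂0 : 0 ≤ C₂ := by rw [hC₂]; positivity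
  have hC₁0 : 0 ≤ C₁ := by rw [hC₁]; positivity
  refine ⟨2 * Real.sqrt (2*C₂) * (2*C₁), ?_⟩
  intro L hLeven hL4 H _ _ _ c hc1 hc2
  set n := L/2 with hn
  have hnL : n ≤ L := Nat.div_le_self L 2
  have hLn : L = 2*n := by obtain ⟨r, hr⟩ := hLeven; omega
  have hn2 : 2 ≤ n := by omega
  set β : Fin L → Fin L → ℝ := fun j k =>
    if (j:ℕ) < n ∧ n ≤ (k:ℕ) then -(1:ℝ) / ((ringDist L j k : ℕ):ℝ)^α else 0 with hβ
  set A : Fin L → (H →L[ℂ] H) := fun j => ∑ k, β j k • c k with hA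
  -- distances are at least min (n-j) (j+1) and at most L, each value attained at most twice
  have hdist : ∀ j k : Fin L, (j:ℕ) < n → n ≤ (k:ℕ) →
      min (n - (j:ℕ)) ((j:ℕ)+1) ≤ ringDist L j k ∧ ringDist L j k ≤ L := by
    intro j k hj hk
    have hkL : (k:ℕ) < L := k.isLt
    have habs : ((j:ℕ):ℤ) - ((k:ℕ):ℤ) = -(((k:ℕ) - (j:ℕ) : ℕ) : ℤ) := by
      push_cast; omega
    unfold ringDist
    rw [habs, Int.natAbs_neg, Int.natAbs_natCast]
    omega
  -- step 1: rewrite the summand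
  have hrw : ∀ j : Fin L, (∑ k : Fin L, if (j:ℕ) < n ∧ n ≤ (k:ℕ) then
        (-(1:ℝ)/((ringDist L j k : ℕ):ℝ)^α) • (adjoint (c j) * c k + adjoint (c k) * c j) else 0)
      = adjoint (c j) * A j + adjoint (A j) * c j := by
    intro j
    rw [hA, adjoint_comb c, Finset.mul_sum, Finset.sum_mul, ← Finset.sum_add_distrib]
    refine Finset.sum_congr rfl fun k _ => ?_
    rw [mul_smul_comm, smul_mul_assoc, ← smul_add]
    by_cases h : (j:ℕ) < n ∧ n ≤ (k:ℕ)
    · rw [if_pos h, hβ]; simp only [h, if_true, and_self]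
    · rw [if_neg h, hβ]; simp only [h, if_false]; rw [zero_smul]
  -- step 2: per-site norm bound
  have hcnorm : ∀ i : Fin L, ‖c i‖ ≤ 1 := fun i => fermion_norm_le_one c hc1 i
  have hAnorm : ∀ j : Fin L, ‖A j‖ ≤ Real.sqrt (∑ k, (β j k)^2) := by
    intro j
    have h := fermion_comb_norm_sq c hc1 (β j)
    rw [hA]
    have h0 : 0 ≤ ∑ k, (β j k)^2 := Finset.sum_nonneg fun k _ => sq_nonneg _
    nlinarith [Real.sq_sqrt h0, Real.sqrt_nonneg (∑ k, (β j k)^2),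
      norm_nonneg (∑ k, β j k • c k)]
  have hterm : ∀ j : Fin L, ‖adjoint (c j) * A j + adjoint (A j) * c j‖
      ≤ 2 * Real.sqrt (∑ k, (β j k)^2) := by
    intro j
    have h1 : ‖adjoint (c j) * A j‖ ≤ Real.sqrt (∑ k, (β j k)^2) := by
      calc ‖adjoint (c j) * A j‖ ≤ ‖adjoint (c j)‖ * ‖A j‖ := norm_mul_le _ _
        _ ≤ 1 * Real.sqrt (∑ k, (β j k)^2) := by
            apply mul_le_mul ?_ (hAnorm j) (norm_nonneg _) zero_le_one
            rw [norm_adjoint']; exact hcnorm j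
        _ = Real.sqrt (∑ k, (β j k)^2) := one_mul _
    have h2 : ‖adjoint (A j) * c j‖ ≤ Real.sqrt (∑ k, (β j k)^2) := by
      calc ‖adjoint (A j) * c j‖ ≤ ‖adjoint (A j)‖ * ‖c j‖ := norm_mul_le _ _
        _ ≤ Real.sqrt (∑ k, (β j k)^2) * 1 := by
            apply mul_le_mul ?_ (hcnorm j) (norm_nonneg _) (Real.sqrt_nonneg _)
            rw [norm_adjoint']; exact hAnorm j
        _ = Real.sqrt (∑ k, (β j k)^2) := mul_one _
    calc ‖adjoint (c j) * A j + adjoint (A j) * c j‖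
        ≤ ‖adjoint (c j) * A j‖ + ‖adjoint (A j) * c j‖ := norm_add_le _ _
      _ ≤ 2 * Real.sqrt (∑ k, (β j k)^2) := by linarith
  -- step 3: coefficient ℓ² bound per site
  have hdisteq : ∀ j k : Fin L, (j:ℕ) ≤ (k:ℕ) →
      ringDist L j k = min ((k:ℕ) - (j:ℕ)) (L - ((k:ℕ)-(j:ℕ))) := by
    intro j k hjk
    have habs : (((j:ℕ):ℤ) - ((k:ℕ):ℤ)).natAbs = (k:ℕ) - (j:ℕ) := by omega
    unfold ringDist
    rw [habs]
  have hβsum : ∀ j : Fin L, (j:ℕ) < n →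
      ∑ k, (β j k)^2 ≤ 2 * C₂ * ((min (n - (j:ℕ)) ((j:ℕ)+1) : ℕ):ℝ)^(1-2*α) := by
    intro j hj
    set m' := min (n - (j:ℕ)) ((j:ℕ)+1) with hm'
    have hm1 : 1 ≤ m' := by omega
    have hsq : ∀ k : Fin L, (β j k)^2
        = if n ≤ (k:ℕ) then ((ringDist L j k : ℕ):ℝ)^(-(2*α)) else 0 := by
      intro k
      by_cases hk : n ≤ (k:ℕ)
      · have hkL : (k:ℕ) < L := k.isLt
        have hd1 : 1 ≤ ringDist L j k := by
          rw [hdisteq j k (by omega)]; omega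
        have hd0 : (0:ℝ) < ((ringDist L j k : ℕ):ℝ) := by exact_mod_cast hd1
        rw [if_pos hk]
        simp only [hβ, hj, hk, and_self, if_true]
        rw [div_pow, neg_one_sq]
        have hpow : (((ringDist L j k : ℕ):ℝ)^α) ^ (2:ℕ)
            = ((ringDist L j k : ℕ):ℝ)^(2*α) := by
          rw [← Real.rpow_natCast (((ringDist L j k : ℕ):ℝ)^α) 2,
            ← Real.rpow_mul hd0.le]
          norm_num
          ring_nf
        rw [hpow, Real.rpow_neg hd0.le, one_div]
      · rw [if_neg hk]
        simp only [hβ, hk, and_false, if_false]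
        norm_num
    have hmaps : ∀ k ∈ Finset.univ.filter (fun k : Fin L => n ≤ (k:ℕ)),
        ringDist L j k ∈ Finset.Icc m' L := by
      intro k hk
      rw [Finset.mem_filter] at hk
      have hkL : (k:ℕ) < L := k.isLt
      rw [Finset.mem_Icc, hdisteq j k (by omega)]
      omega
    have hcard : ∀ d ∈ Finset.Icc m' L,
        ((Finset.univ.filter (fun k : Fin L => n ≤ (k:ℕ))).filter
          (fun k : Fin L => ringDist L j k = d)).card ≤ 2 := by
      intro d _
      have hsub : ((Finset.univ.filter (fun k : Fin L => n ≤ (k:ℕ))).filter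
          (fun k : Fin L => ringDist L j k = d)).card
          ≤ ({(j:ℕ)+d, (j:ℕ)+(L-d)} : Finset ℕ).card := by
        apply Finset.card_le_card_of_injOn (fun k : Fin L => (k:ℕ)) ?_ ?_
        · intro k hk
          rw [Finset.mem_coe, Finset.mem_filter, Finset.mem_filter] at hk
          obtain ⟨⟨_, hkn⟩, hkd⟩ := hk
          have hkL : (k:ℕ) < L := k.isLt
          rw [hdisteq j k (by omega)] at hkd
          simp only [Finset.mem_coe, Finset.mem_insert, Finset.mem_singleton]
          omega
        · intro a _ b _ hab
          exact Fin.ext hab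
      refine hsub.trans ?_
      exact (Finset.card_insert_le _ _).trans (by simp)
    calc ∑ k, (β j k)^2
        = ∑ k ∈ Finset.univ.filter (fun k : Fin L => n ≤ (k:ℕ)),
            ((ringDist L j k : ℕ):ℝ)^(-(2*α)) := by
          rw [Finset.sum_filter]
          exact Finset.sum_congr rfl fun k _ => hsq k
      _ = ∑ d ∈ Finset.Icc m' L,
            ∑ _k ∈ (Finset.univ.filter (fun k : Fin L => n ≤ (k:ℕ))).filter
              (fun k : Fin L => ringDist L j k = d), ((d:ℕ):ℝ)^(-(2*α)) :=
          (Finset.sum_fiberwise_of_maps_to' hmaps (fun d : ℕ => (d:ℝ)^(-(2*α)))).symm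
      _ ≤ ∑ d ∈ Finset.Icc m' L, 2 * ((d:ℕ):ℝ)^(-(2*α)) := by
          apply Finset.sum_le_sum
          intro d hd
          rw [Finset.sum_const, nsmul_eq_mul]
          have hf0 : (0:ℝ) ≤ ((d:ℕ):ℝ)^(-(2*α)) := Real.rpow_nonneg (Nat.cast_nonneg d) _
          have : (((Finset.univ.filter (fun k : Fin L => n ≤ (k:ℕ))).filter
              (fun k : Fin L => ringDist L j k = d)).card : ℝ) ≤ 2 := by
            exact_mod_cast hcard d hd
          exact mul_le_mul_of_nonneg_right this hf0
      _ = 2 * ∑ d ∈ Finset.Icc m' L, ((d:ℕ):ℝ)^(-(2*α)) := (Finset.mul_sum _ _ _).symm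
      _ ≤ 2 * (C₂ * (m':ℝ)^(1-2*α)) := by
          apply mul_le_mul_of_nonneg_left _ (by norm_num : (0:ℝ) ≤ 2)
          exact tail_bound hs2 hm1 L
      _ = 2 * C₂ * (m':ℝ)^(1-2*α) := by ring
  -- step 4: per-j bound including the sqrt
  have hsqrt : ∀ j : Fin L, 2 * Real.sqrt (∑ k, (β j k)^2)
      ≤ 2 * Real.sqrt (2*C₂) *
        (if (j:ℕ) < n then ((min (n - (j:ℕ)) ((j:ℕ)+1) : ℕ):ℝ)^(-(α-1/2)) else 0) := by
    intro j
    by_cases hj : (j:ℕ) < n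
    · rw [if_pos hj]
      set m' := min (n - (j:ℕ)) ((j:ℕ)+1) with hm'
      have hm1 : 1 ≤ m' := by omega
      have hm0 : (0:ℝ) < (m':ℝ) := by exact_mod_cast hm1
      have h1 := hβsum j hj
      have h2 : Real.sqrt (∑ k, (β j k)^2) ≤ Real.sqrt (2*C₂*(m':ℝ)^(1-2*α)) := by
        apply Real.sqrt_le_sqrt
        calc ∑ k, (β j k)^2 ≤ 2 * C₂ * (m':ℝ)^(1-2*α) := h1
          _ = 2*C₂*(m':ℝ)^(1-2*α) := by ring
      have h3 : Real.sqrt (2*C₂*(m':ℝ)^(1-2*α))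
          = Real.sqrt (2*C₂) * (m':ℝ)^(-(α-1/2)) := by
        rw [Real.sqrt_mul (by positivity)]
        congr 1
        rw [show (1-2*α) = (-(α-1/2))*(2:ℕ) by push_cast; ring,
          Real.rpow_mul hm0.le, Real.rpow_natCast]
        exact Real.sqrt_sq (Real.rpow_nonneg hm0.le _)
      calc 2 * Real.sqrt (∑ k, (β j k)^2)
          ≤ 2 * (Real.sqrt (2*C₂) * (m':ℝ)^(-(α-1/2))) := by
            rw [← h3]; linarith
        _ = 2 * Real.sqrt (2*C₂) * ((m':ℕ):ℝ)^(-(α-1/2)) := by ring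
    · rw [if_neg hj]
      have hz : ∀ k : Fin L, β j k = 0 := by
        intro k; simp only [hβ, hj, false_and, if_false]
      have hz2 : ∑ k, (β j k)^2 = 0 := by
        apply Finset.sum_eq_zero; intro k _; rw [hz k]; ring
      rw [hz2, Real.sqrt_zero]
      simp
  -- step 5: sum the per-site bounds
  have hCs0 : (0:ℝ) ≤ 2 * Real.sqrt (2*C₂) := by positivity
  have hsum1 : ∑ d ∈ Finset.Icc 1 n, ((d:ℕ):ℝ)^(-(α-1/2)) ≤ C₁ := by
    have h := tail_bound hs1 (le_refl 1) n
    rwa [Nat.cast_one, Real.one_rpow, mul_one] at h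
  have hg : ∑ j : Fin L,
      (if (j:ℕ) < n then ((min (n - (j:ℕ)) ((j:ℕ)+1) : ℕ):ℝ)^(-(α-1/2)) else 0) ≤ 2*C₁ := by
    rw [Fin.sum_univ_eq_sum_range
      (fun j => if j < n then ((min (n - j) (j+1) : ℕ):ℝ)^(-(α-1/2)) else 0) L]
    have e1 : ∑ j ∈ Finset.range L,
        (if j < n then ((min (n - j) (j+1) : ℕ):ℝ)^(-(α-1/2)) else 0)
        = ∑ j ∈ Finset.range n, ((min (n - j) (j+1) : ℕ):ℝ)^(-(α-1/2)) := by
      rw [← Finset.sum_filter]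
      congr 1
      ext j
      simp only [Finset.mem_filter, Finset.mem_range]
      omega
    rw [e1]
    have e2 : ∑ j ∈ Finset.range n, ((min (n - j) (j+1) : ℕ):ℝ)^(-(α-1/2))
        ≤ ∑ j ∈ Finset.range n,
          (((n - j : ℕ):ℝ)^(-(α-1/2)) + (((j+1) : ℕ):ℝ)^(-(α-1/2))) := by
      apply Finset.sum_le_sum
      intro j hj
      rcases min_choice (n - j) (j+1) with h | h
      · rw [h]
        have : (0:ℝ) ≤ (((j+1) : ℕ):ℝ)^(-(α-1/2)) := Real.rpow_nonneg (Nat.cast_nonneg _) _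
        linarith
      · rw [h]
        have : (0:ℝ) ≤ (((n - j) : ℕ):ℝ)^(-(α-1/2)) := Real.rpow_nonneg (Nat.cast_nonneg _) _
        linarith
    refine e2.trans ?_
    rw [Finset.sum_add_distrib]
    have e3 : ∑ j ∈ Finset.range n, (((n - j) : ℕ):ℝ)^(-(α-1/2))
        = ∑ d ∈ Finset.Icc 1 n, ((d:ℕ):ℝ)^(-(α-1/2)) := by
      apply Finset.sum_nbij' (i := fun j => n - j) (j := fun d => n - d)
      · intro a ha; rw [Finset.mem_range] at ha; rw [Finset.mem_Icc]; omega
      · intro a ha; rw [Finset.mem_Icc] at ha; rw [Finset.mem_range]; omega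
      · intro a ha; rw [Finset.mem_range] at ha; omega
      · intro a ha; rw [Finset.mem_Icc] at ha; omega
      · intro a _; rfl
    have e4 : ∑ j ∈ Finset.range n, (((j+1) : ℕ):ℝ)^(-(α-1/2))
        = ∑ d ∈ Finset.Icc 1 n, ((d:ℕ):ℝ)^(-(α-1/2)) := by
      apply Finset.sum_nbij' (i := fun j => j + 1) (j := fun d => d - 1)
      · intro a ha; rw [Finset.mem_range] at ha; rw [Finset.mem_Icc]; omega
      · intro a ha; rw [Finset.mem_Icc] at ha; rw [Finset.mem_range]; omega
      · intro a _; omega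
      · intro a ha; rw [Finset.mem_Icc] at ha; omega
      · intro a _; rfl
    rw [e3, e4]
    linarith
  -- final calculation
  have hmain : (∑ j : Fin L, ∑ k : Fin L,
      if (j:ℕ) < n ∧ n ≤ (k:ℕ) then
        (-(1:ℝ)/((ringDist L j k : ℕ):ℝ)^α) •
          (adjoint (c j) * c k + adjoint (c k) * c j) else 0)
      = ∑ j : Fin L, (adjoint (c j) * A j + adjoint (A j) * c j) :=
    Finset.sum_congr rfl fun j _ => hrw j
  rw [hmain]
  calc ‖∑ j : Fin L, (adjoint (c j) * A j + adjoint (A j) * c j)‖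
      ≤ ∑ j : Fin L, ‖adjoint (c j) * A j + adjoint (A j) * c j‖ := norm_sum_le _ _
    _ ≤ ∑ j : Fin L, 2 * Real.sqrt (∑ k, (β j k)^2) := Finset.sum_le_sum fun j _ => hterm j
    _ ≤ ∑ j : Fin L, 2 * Real.sqrt (2*C₂) *
          (if (j:ℕ) < n then ((min (n - (j:ℕ)) ((j:ℕ)+1) : ℕ):ℝ)^(-(α-1/2)) else 0) :=
        Finset.sum_le_sum fun j _ => hsqrt j
    _ = 2 * Real.sqrt (2*C₂) * ∑ j : Fin L,
          (if (j:ℕ) < n then ((min (n - (j:ℕ)) ((j:ℕ)+1) : ℕ):ℝ)^(-(α-1/2)) else 0) :=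
        (Finset.mul_sum _ _ _).symm
    _ ≤ 2 * Real.sqrt (2*C₂) * (2*C₁) := mul_le_mul_of_nonneg_left hg hCs0

end Main
end
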